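/- Under the same hypotheses as the previous statement (relations (2.2), (2.3), (2.4) of the polling model and the definition of L via the stochastic mean value theorem), the joint queue-length PGF satisfies L(z) = (1/EC)·Σ_{i=1}^m [ (V^b_i(z) − V^c_i(z))/Σ(z) · z_i(1−B̃_i(Σ(z)))/(z_i − B̃_i(Σ(z))) + (V^c_i(z) − V^b_{i+1}(z))/Σ(z) ], i.e. equation (2.1) (Theorem 1 of Boxma–Kella–Kosiński) holds. -/

import Mathlib

open Finset

/-- Equation (2.1) (Theorem 1 of Boxma–Kella–Kosiński): the joint queue-length PGF
in terms of the visit-beginning and visit-completion PGFs. -/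
theorem stmt8 (m : ℕ) [NeZero m] (hm : 1 ≤ m)
    (lam b s : Fin m → ℝ) (EC : ℝ)
    (z Vb Vc Sb Sc Bt St : Fin m → ℝ)
    (hEC : EC ≠ 0) (hb : ∀ i, b i ≠ 0) (hs : ∀ i, s i ≠ 0)
    (hlam : ∀ i, lam i ≠ 0) (hz : ∀ i, z i ≠ 0)
    (hzB : ∀ i, z i ≠ Bt i)
    (Sig : ℝ) (hSig : Sig = ∑ j, lam j * (1 - z j)) (hSig0 : Sig ≠ 0)
    (γ : Fin m → ℝ) (hγ : ∀ i, γ i = 1 / (lam i * EC))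
    (h1 : ∀ i, γ i * Vb i + Sc i = Sb i + γ i * Vc i)
    (h2 : ∀ i, Sc i = Sb i * Bt i / z i)
    (h3 : ∀ i, Vb (i + 1) = Vc i * St i)
    (L : ℝ)
    (hL : L = (1 / EC) * ∑ i, ((b i / γ i) * Sb i * (1 - Bt i) / (b i * Sig)
        + s i * Vc i * (1 - St i) / (s i * Sig))) :
    L = (1 / EC) * ∑ i, ((Vb i - Vc i) / Sig * (z i * (1 - Bt i) / (z i - Bt i))
        + (Vc i - Vb (i + 1)) / Sig) := by
  rw [hL]
  congr 1
  apply Finset.sum_congr rfl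
  intro i _
  have hγ0 : γ i ≠ 0 := by
    rw [hγ i]
    simp [hlam i, hEC]
  have hzB' : z i - Bt i ≠ 0 := sub_ne_zero.mpr (hzB i)
  have h2i : Sc i * z i = Sb i * Bt i := by
    have := h2 i; rw [eq_div_iff (hz i)] at this; linarith
  have key : γ i * (Vb i - Vc i) * z i = Sb i * (z i - Bt i) := by
    linear_combination z i * h1 i - h2i
  congr 1
  · field_simp [hb i, hz i]
    linear_combination (-(1 - Bt i)) * key
  · rw [h3 i]
    field_simp [hs i]
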